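/- arXiv:1509.04199 — 7 statements merged into one kernel-verified Lean document; each statement's English description precedes it below -/
import Mathlib

section
/- For every finite nonempty set D of integers ≥ 2 and every finite set S of positive integers, the Sprague-Grundy sequence of the game i-Mark(S,D) is aperiodic: there do not exist q ≥ 0 and p ≥ 1 such that g(n) = g(n+p) for all n ≥ q. -/
/-- The minimum excludant of a finite set of naturals. -/
noncomputable def mex (s : Finset ℕ) : ℕ := sInf {k : ℕ | k ∉ s}

/-- Options of the game i-Mark(S,D) from a heap of `n` tokens:
move to `n - s` for `s ∈ S` (with `1 ≤ s ≤ n`), or to `n / d` for `d ∈ D`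
(with `2 ≤ d` and `d ∣ n`, `n ≥ 1`). -/
def iMarkOptions (S D : Finset ℕ) (n : ℕ) : Finset ℕ :=
  ((S.filter (fun s => 1 ≤ s ∧ s ≤ n)).image (fun s => n - s)) ∪
  ((D.filter (fun d => 2 ≤ d ∧ d ∣ n ∧ 1 ≤ n)).image (fun d => n / d))

theorem iMarkOptions_lt {S D : Finset ℕ} {n m : ℕ} (h : m ∈ iMarkOptions S D n) : m < n := by
  simp only [iMarkOptions, Finset.mem_union, Finset.mem_image, Finset.mem_filter] at h
  rcases h with ⟨s, ⟨_, h1, h2⟩, rfl⟩ | ⟨d, ⟨_, h2, hd, hn⟩, rfl⟩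
  · omega
  · exact Nat.div_lt_self hn h2

/-- The Sprague-Grundy value of a heap of `n` tokens in the game i-Mark(S,D). -/
noncomputable def grundy (S D : Finset ℕ) (n : ℕ) : ℕ :=
  mex ((iMarkOptions S D n).attach.image (fun m => grundy S D m.1))
termination_by n
decreasing_by exact iMarkOptions_lt m.2

/-- `misereP S D n` means `n` is a P-position of i-Mark(S,D) under misère convention:
`n` has at least one option and every option is an N-position. -/
def misereP (S D : Finset ℕ) (n : ℕ) : Prop :=
  (iMarkOptions S D n).Nonempty ∧
    ∀ m : {x // x ∈ iMarkOptions S D n}, ¬ misereP S D m.1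
termination_by n
decreasing_by exact iMarkOptions_lt m.2

lemma mex_not_mem (s : Finset ℕ) : mex s ∉ s := by
  have hne : {k : ℕ | k ∉ s}.Nonempty := by
    refine ⟨s.sup id + 1, fun h => ?_⟩
    have := Finset.le_sup (f := id) h
    simp only [id] at this
    omega
  exact Nat.sInf_mem hne

lemma grundy_ne_option {S D : Finset ℕ} {n m : ℕ} (h : m ∈ iMarkOptions S D n) :
    grundy S D n ≠ grundy S D m := by
  intro heq
  rw [grundy] at heq
  apply mex_not_mem ((iMarkOptions S D n).attach.image (fun m => grundy S D m.1))
  rw [heq]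
  exact Finset.mem_image_of_mem _ (Finset.mem_attach _ ⟨m, h⟩)

lemma grundy_periodic_iter {S D : Finset ℕ} {q p : ℕ}
    (h : ∀ n, q ≤ n → grundy S D n = grundy S D (n + p)) :
    ∀ k n, q ≤ n → grundy S D n = grundy S D (n + k * p) := by
  intro k
  induction k with
  | zero => simp
  | succ k ih =>
    intro n hn
    have := h (n + k * p) (by omega)
    rw [ih n hn, this]
    ring_nf

theorem iMark_grundy_aperiodic' (S D : Finset ℕ)
    (hS : ∀ s ∈ S, 1 ≤ s) (hD : ∀ d ∈ D, 2 ≤ d) (hDne : D.Nonempty) :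
    ¬ ∃ q p : ℕ, 1 ≤ p ∧ ∀ n, q ≤ n → grundy S D n = grundy S D (n + p) := by
  rintro ⟨q, p, hp, h⟩
  obtain ⟨d, hd⟩ := hDne
  have hd2 : 2 ≤ d := hD d hd
  set m : ℕ := p * (q + 1) with hm
  have hmq : q ≤ m := by rw [hm]; nlinarith
  have hm1 : 1 ≤ m := by rw [hm]; nlinarith
  have hopt : m ∈ iMarkOptions S D (d * m) := by
    simp only [iMarkOptions, Finset.mem_union, Finset.mem_image, Finset.mem_filter]
    right
    exact ⟨d, ⟨hd, hd2, Dvd.intro m rfl, Nat.mul_pos (by omega) hm1⟩, Nat.mul_div_cancel_left m (by omega)⟩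
  have hper : grundy S D m = grundy S D (d * m) := by
    have := grundy_periodic_iter h ((d - 1) * (q + 1)) m hmq
    obtain ⟨e, rfl⟩ : ∃ e, d = e + 1 := ⟨d - 1, by omega⟩
    have he : m + (e + 1 - 1) * (q + 1) * p = (e + 1) * m := by
      simp only [Nat.add_sub_cancel, hm]; ring
    rwa [he] at this
  exact grundy_ne_option hopt hper.symm

/-- The Sprague-Grundy sequence of i-Mark(S,D) is aperiodic for any nonempty D. -/
theorem iMark_grundy_aperiodic (S D : Finset ℕ)
    (hS : ∀ s ∈ S, 1 ≤ s) (hD : ∀ d ∈ D, 2 ≤ d) (hDne : D.Nonempty) :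
    ¬ ∃ q p : ℕ, 1 ≤ p ∧ ∀ n, q ≤ n → grundy S D n = grundy S D (n + p) :=
  iMark_grundy_aperiodic' S D hS hD hDne
end

section
/- In the game i-Mark({1},{2}), the set of P-positions (positions with Sprague-Grundy value 0 under normal play) is exactly {0, 2} ∪ {2k+1 : k ≥ 2}, and the set of N-positions is {1, 3} ∪ {2k : k ≥ 2}. -/
lemma mex_eq_zero_iff (s : Finset ℕ) : mex s = 0 ↔ 0 ∉ s := by
  unfold mex
  constructor
  · intro h h0
    obtain ⟨k, hk⟩ := Infinite.exists_notMem_finset s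
    have hne : {k : ℕ | k ∉ s}.Nonempty := ⟨k, hk⟩
    have := Nat.sInf_mem hne
    rw [h] at this
    exact this h0
  · intro h
    exact Nat.sInf_eq_zero.mpr (Or.inl h)

lemma grundy_eq_zero_iff (S D : Finset ℕ) (n : ℕ) :
    grundy S D n = 0 ↔ ∀ m ∈ iMarkOptions S D n, grundy S D m ≠ 0 := by
  rw [grundy, mex_eq_zero_iff]
  simp

lemma mem_options (n m : ℕ) :
    m ∈ iMarkOptions {1} {2} n ↔ (1 ≤ n ∧ m = n - 1) ∨ (2 ∣ n ∧ 1 ≤ n ∧ m = n / 2) := by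
  simp only [iMarkOptions, Finset.mem_union, Finset.mem_image, Finset.mem_filter,
    Finset.mem_singleton]
  constructor
  · rintro (⟨s, ⟨rfl, _, hs⟩, rfl⟩ | ⟨d, ⟨rfl, _, hd, hn⟩, rfl⟩)
    · exact Or.inl ⟨hs, rfl⟩
    · exact Or.inr ⟨hd, hn, rfl⟩
  · rintro (⟨h1, rfl⟩ | ⟨hd, h1, rfl⟩)
    · exact Or.inl ⟨1, ⟨rfl, le_refl 1, h1⟩, rfl⟩
    · exact Or.inr ⟨2, ⟨rfl, le_refl 2, hd, h1⟩, rfl⟩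

lemma main_zero (n : ℕ) : grundy {1} {2} n = 0 ↔
    (n = 0 ∨ n = 2 ∨ (n % 2 = 1 ∧ 5 ≤ n)) := by
  induction n using Nat.strong_induction_on with
  | _ n IH =>
    rw [grundy_eq_zero_iff]
    constructor
    · intro h
      by_contra hn
      push_neg at hn
      obtain ⟨h0, h2, h5⟩ := hn
      rcases Nat.even_or_odd n with he | ho
      · -- n even, n ≥ 4 (n≠0,2): option n-1 or n/2 has grundy 0
        obtain ⟨k, hk⟩ := he
        have hn4 : 4 ≤ n := by omega
        by_cases h4 : n = 4
        · have := h (n / 2) (mem_options n (n/2) |>.mpr (Or.inr ⟨by omega, by omega, rfl⟩))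
          rw [Ne, IH (n/2) (by omega)] at this
          omega
        · have := h (n - 1) (mem_options n (n-1) |>.mpr (Or.inl ⟨by omega, rfl⟩))
          rw [Ne, IH (n-1) (by omega)] at this
          omega
      · -- n odd, n = 1 or 3: option n-1 has grundy 0
        have hn1 : n % 2 = 1 := Nat.odd_iff.mp ho
        have := h (n - 1) (mem_options n (n-1) |>.mpr (Or.inl ⟨by omega, rfl⟩))
        rw [Ne, IH (n-1) (by omega)] at this
        omega
    · intro hn m hm
      rw [mem_options] at hm
      have hlt : m < n := by
        rcases hm with ⟨h1, rfl⟩ | ⟨hd, h1, rfl⟩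
        · omega
        · omega
      rw [Ne, IH m hlt]
      rcases hm with ⟨h1, rfl⟩ | ⟨hd, h1, rfl⟩ <;> omega

/-- P- and N-positions of i-Mark({1},{2}). -/
theorem iMark_1_2_outcomes :
    (∀ n : ℕ, grundy {1} {2} n = 0 ↔ (n = 0 ∨ n = 2 ∨ ∃ k : ℕ, 2 ≤ k ∧ n = 2 * k + 1)) ∧
    (∀ n : ℕ, grundy {1} {2} n ≠ 0 ↔ (n = 1 ∨ n = 3 ∨ ∃ k : ℕ, 2 ≤ k ∧ n = 2 * k)) := by
  constructor
  · intro n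
    rw [main_zero]
    constructor
    · rintro (h | h | ⟨h1, h2⟩)
      · exact Or.inl h
      · exact Or.inr (Or.inl h)
      · exact Or.inr (Or.inr ⟨n / 2, by omega, by omega⟩)
    · rintro (h | h | ⟨k, hk, rfl⟩) <;> omega
  · intro n
    rw [Ne, main_zero]
    constructor
    · intro h
      push_neg at h
      obtain ⟨h0, h2, h5⟩ := h
      rcases Nat.even_or_odd n with he | ho
      · obtain ⟨k, hk⟩ := he
        right; right; exact ⟨k, by omega, by omega⟩
      · have := Nat.odd_iff.mp ho; omega
    · rintro (h | h | ⟨k, hk, rfl⟩) <;> omega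
end

section
/- In the game i-Mark({1},{2}), for every position n, g(n) = 2 if and only if n is even and either (i) the odd part of n equals 3 and the 2-adic valuation of n is odd, or (ii) the odd part of n is not 3 and the 2-adic valuation of n is even (and positive). -/
-- auxiliary lemmas

lemma mex_eq {s : Finset ℕ} {m : ℕ} (h1 : m ∉ s) (h2 : ∀ k < m, k ∈ s) : mex s = m := by
  refine le_antisymm (Nat.sInf_le h1) (le_csInf ⟨m, h1⟩ ?_)
  intro b hb
  by_contra h
  exact hb (h2 b (by omega))

lemma grundy_eq (S D : Finset ℕ) (n : ℕ) :
    grundy S D n = mex ((iMarkOptions S D n).image (grundy S D)) := by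
  rw [grundy]
  congr 1
  conv_rhs => rw [← Finset.attach_image_val (s := iMarkOptions S D n)]
  rw [Finset.image_image]
  rfl

lemma options_zero : iMarkOptions {1} {2} 0 = ∅ := by decide

lemma options_odd {n : ℕ} (h : n % 2 = 1) : iMarkOptions {1} {2} n = {n - 1} := by
  ext x
  simp only [iMarkOptions, Finset.mem_union, Finset.mem_image, Finset.mem_filter,
    Finset.mem_singleton]
  constructor
  · rintro (⟨s, ⟨hs, _⟩, rfl⟩ | ⟨d, ⟨hd, _, hdvd, _⟩, rfl⟩)
    · omega
    · subst hd; omega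
  · rintro rfl
    exact Or.inl ⟨1, ⟨rfl, by omega⟩, rfl⟩

lemma options_even {n : ℕ} (h : n % 2 = 0) (h2 : 2 ≤ n) :
    iMarkOptions {1} {2} n = {n - 1, n / 2} := by
  ext x
  simp only [iMarkOptions, Finset.mem_union, Finset.mem_image, Finset.mem_filter,
    Finset.mem_insert, Finset.mem_singleton]
  constructor
  · rintro (⟨s, ⟨hs, _⟩, rfl⟩ | ⟨d, ⟨hd, _⟩, rfl⟩)
    · omega
    · subst hd; right; rfl
  · rintro (rfl | rfl)
    · exact Or.inl ⟨1, ⟨rfl, by omega⟩, rfl⟩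
    · exact Or.inr ⟨2, ⟨rfl, by omega⟩, rfl⟩

/-- The closed form for the grundy values, stated with `n / 2 ^ padicValNat 2 n`
in place of `ordCompl`. -/
def F (n : ℕ) : ℕ :=
  if n % 2 = 1 then (if n = 1 ∨ n = 3 then 1 else 0)
  else if n ≤ 2 then 0
  else if (n / 2 ^ padicValNat 2 n = 3 ↔ padicValNat 2 n % 2 = 1) then 2 else 1

lemma ordCompl_eq (n : ℕ) : ordCompl[2] n = n / 2 ^ padicValNat 2 n := by
  rw [Nat.factorization_def n Nat.prime_two]

lemma padicValNat_two_two : padicValNat 2 2 = 1 := padicValNat.self (by norm_num)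

lemma F_one : F 1 = 1 := rfl
lemma F_three : F 3 = 1 := rfl
lemma F_zero : F 0 = 0 := rfl
lemma F_two : F 2 = 0 := rfl
lemma F_five : F 5 = 0 := rfl

lemma padicValNat_pos {n : ℕ} (h : n % 2 = 0) (h0 : 0 < n) : 0 < padicValNat 2 n :=
  one_le_padicValNat_of_dvd h0.ne' ⟨n / 2, by omega⟩

lemma F_four : F 4 = 2 := by
  have hv : padicValNat 2 4 = 2 := by
    rw [show (4:ℕ) = 2 ^ 2 by norm_num, padicValNat.prime_pow]
  simp only [F, hv]
  norm_num

lemma padicValNat_two_six : padicValNat 2 6 = 1 := by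
  rw [show (6:ℕ) = 2 * 3 by norm_num, padicValNat.mul (by norm_num) (by norm_num),
    padicValNat_two_two, padicValNat.eq_zero_of_not_dvd (by norm_num)]

lemma F_six : F 6 = 2 := by
  simp only [F, padicValNat_two_six]
  norm_num

lemma grundy_eq_F : ∀ n, grundy {1} {2} n = F n := by
  intro n
  induction n using Nat.strong_induction_on with
  | _ n ih =>
  rcases Nat.even_or_odd n with he | ho
  · -- n even
    have h2 : n % 2 = 0 := Nat.even_iff.mp he
    rcases Nat.lt_or_ge n 2 with h | h
    · have hn0 : n = 0 := by omega
      subst hn0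
      rw [grundy_eq, options_zero]
      simp only [Finset.image_empty, F_zero]
      exact mex_eq (by simp) (by omega)
    · rw [grundy_eq, options_even h2 h]
      have hv1 : 0 < padicValNat 2 n := padicValNat_pos h2 (by omega)
      have hvd : padicValNat 2 (n / 2) = padicValNat 2 n - 1 := padicValNat.div ⟨n / 2, by omega⟩
      have hoc : n / 2 / 2 ^ padicValNat 2 (n / 2) = n / 2 ^ padicValNat 2 n := by
        rw [hvd, Nat.div_div_eq_div_mul, ← pow_succ']
        congr 2
        omega
      rw [Finset.image_insert, Finset.image_singleton, ih _ (by omega), ih _ (by omega)]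
      rcases Nat.lt_or_ge n 8 with h8 | h8
      · interval_cases n
        · -- n = 2
          rw [show (2:ℕ) - 1 = 1 from rfl, show (2:ℕ) / 2 = 1 from rfl, F_one, F_two]
          exact mex_eq (by simp) (by omega)
        · exact absurd h2 (by norm_num)
        · -- n = 4
          rw [show (4:ℕ) - 1 = 3 from rfl, show (4:ℕ) / 2 = 2 from rfl, F_three, F_two, F_four]
          refine mex_eq (by simp) ?_
          intro k hk
          interval_cases k <;> simp
        · exact absurd h2 (by norm_num)
        · -- n = 6
          rw [show (6:ℕ) - 1 = 5 from rfl, show (6:ℕ) / 2 = 3 from rfl, F_five, F_three, F_six]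
          refine mex_eq (by simp) ?_
          intro k hk
          interval_cases k <;> simp
        · exact absurd h2 (by norm_num)
      · -- n ≥ 8 even
        have hFn1 : F (n - 1) = 0 := by
          simp only [F]
          rw [if_pos (by omega), if_neg (by omega)]
        rw [hFn1]
        rcases Nat.even_or_odd (n / 2) with he2 | ho2
        · -- n/2 even, so v(n) ≥ 2
          have h2' : n / 2 % 2 = 0 := Nat.even_iff.mp he2
          have hv2 : 0 < padicValNat 2 (n / 2) := padicValNat_pos h2' (by omega)
          have hiff2 : (n / 2 / 2 ^ padicValNat 2 (n / 2) = 3 ↔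
                padicValNat 2 (n / 2) % 2 = 1) ↔
              (n / 2 ^ padicValNat 2 n = 3 ↔ padicValNat 2 n % 2 = 0) := by
            rw [hoc, hvd]
            by_cases ha : n / 2 ^ padicValNat 2 n = 3 <;> simp [ha] <;> omega
          have hF2 : F (n / 2) =
              if (n / 2 ^ padicValNat 2 n = 3 ↔ padicValNat 2 n % 2 = 0) then 2 else 1 := by
            simp only [F]
            rw [if_neg (by omega), if_neg (by omega), if_congr hiff2 rfl rfl]
          have hFn : F n =
              if (n / 2 ^ padicValNat 2 n = 3 ↔ padicValNat 2 n % 2 = 1) then 2 else 1 := by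
            simp only [F]
            rw [if_neg (by omega), if_neg (by omega)]
          by_cases hc : (n / 2 ^ padicValNat 2 n = 3 ↔ padicValNat 2 n % 2 = 1)
          · rw [hFn, if_pos hc, hF2, if_neg (by rw [hc]; omega)]
            refine mex_eq (by simp) ?_
            intro k hk; interval_cases k <;> simp
          · have hc' : (n / 2 ^ padicValNat 2 n = 3 ↔ padicValNat 2 n % 2 = 0) := by
              by_cases h3 : n / 2 ^ padicValNat 2 n = 3 <;> simp [h3] at hc ⊢ <;> omega
            rw [hFn, if_neg hc, hF2, if_pos hc']
            refine mex_eq (by simp) ?_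
            intro k hk; interval_cases k <;> simp
        · -- n/2 odd, v(n) = 1, odd part = n/2 ≥ 5
          have h2' : n / 2 % 2 = 1 := Nat.odd_iff.mp ho2
          have hF2 : F (n / 2) = 0 := by
            simp only [F]
            rw [if_pos h2', if_neg (by omega)]
          have hv : padicValNat 2 n = 1 := by
            have h0 : padicValNat 2 (n / 2) = 0 :=
              padicValNat.eq_zero_of_not_dvd (by omega)
            omega
          have hFn : F n = 1 := by
            simp only [F, hv]
            rw [if_neg (by omega), if_neg (by omega), if_neg (by rw [pow_one]; simp; omega)]
          rw [hF2, hFn]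
          refine mex_eq (by simp) ?_
          intro k hk; interval_cases k <;> simp
  · -- n odd
    have h1 : n % 2 = 1 := Nat.odd_iff.mp ho
    rw [grundy_eq, options_odd h1, Finset.image_singleton, ih _ (by omega)]
    rcases Nat.lt_or_ge n 5 with h | h
    · interval_cases n
      · exact absurd h1 (by norm_num)
      · rw [show (1:ℕ) - 1 = 0 from rfl, F_zero, F_one]
        refine mex_eq (by simp) ?_
        intro k hk; interval_cases k; simp
      · exact absurd h1 (by norm_num)
      · rw [show (3:ℕ) - 1 = 2 from rfl, F_two, F_three]
        refine mex_eq (by simp) ?_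
        intro k hk; interval_cases k; simp
      · exact absurd h1 (by norm_num)
    · -- n odd ≥ 5, n - 1 even ≥ 4, so F (n-1) ∈ {1, 2}
      have hF1 : F (n - 1) = 1 ∨ F (n - 1) = 2 := by
        simp only [F]
        rw [if_neg (by omega), if_neg (by omega)]
        split <;> simp
      have hFn : F n = 0 := by
        simp only [F]
        rw [if_pos h1, if_neg (by omega)]
      rw [hFn]
      refine mex_eq (by simp; omega) (by omega)

/-- Characterization of positions of g-value 2 in i-Mark({1},{2}). -/
theorem iMark_1_2_grundy_eq_two (n : ℕ) :
    grundy {1} {2} n = 2 ↔ Even n ∧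
      ((ordCompl[2] n = 3 ∧ Odd (padicValNat 2 n)) ∨
       (ordCompl[2] n ≠ 3 ∧ Even (padicValNat 2 n) ∧ 0 < padicValNat 2 n)) := by
  rw [grundy_eq_F, ordCompl_eq]
  rcases Nat.even_or_odd n with he | ho
  · have h2 : n % 2 = 0 := Nat.even_iff.mp he
    rcases Nat.lt_or_ge n 3 with h | h
    · interval_cases n
      · simp [F, padicValNat.zero]
      · exact absurd h2 (by norm_num)
      · rw [F_two, padicValNat_two_two]
        simp [Nat.odd_iff, Nat.even_iff]
    · have hv1 : 0 < padicValNat 2 n := padicValNat_pos h2 (by omega)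
      simp only [F, if_neg (by omega : ¬ n % 2 = 1), if_neg (by omega : ¬ n ≤ 2)]
      rw [Nat.odd_iff, Nat.even_iff, Nat.even_iff]
      constructor
      · intro hx
        refine ⟨h2, ?_⟩
        have hiff : (n / 2 ^ padicValNat 2 n = 3 ↔ padicValNat 2 n % 2 = 1) := by
          by_contra hc; rw [if_neg hc] at hx; omega
        by_cases h3 : n / 2 ^ padicValNat 2 n = 3
        · exact Or.inl ⟨h3, hiff.mp h3⟩
        · refine Or.inr ⟨h3, ?_, hv1⟩
          by_contra hv
          exact h3 (hiff.mpr (by omega))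
      · rintro ⟨-, (⟨h3, hodd⟩ | ⟨h3, heven, -⟩)⟩
        · rw [if_pos ⟨fun _ => hodd, fun _ => h3⟩]
        · rw [if_pos ⟨fun h => absurd h h3, fun h => absurd h (by omega)⟩]
  · have h1 : n % 2 = 1 := Nat.odd_iff.mp ho
    have hne : ¬ Even n := by rw [Nat.even_iff]; omega
    simp only [hne, false_and, iff_false]
    simp only [F, if_pos h1]
    split <;> omega
end

section
/- Let t ≥ 2 and let D be a set of integers ≥ 2 with d ≢ 1 (mod t) for every d ∈ D. Then in the misère game i-MiMark([1,t−1],D), the set of P-positions is exactly {qt + 1 : q ≥ 0}; in particular the outcome sequence is purely periodic with period t. -/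
theorem misereP_iff (S D : Finset ℕ) (n : ℕ) :
    misereP S D n ↔ (iMarkOptions S D n).Nonempty ∧ ∀ m ∈ iMarkOptions S D n, ¬ misereP S D m := by
  rw [misereP]
  exact ⟨fun ⟨h1, h2⟩ => ⟨h1, fun m hm => h2 ⟨m, hm⟩⟩, fun ⟨h1, h2⟩ => ⟨h1, fun m => h2 m.1 m.2⟩⟩

theorem mem_iMarkOptions_iff {t : ℕ} (D : Finset ℕ) (hD : ∀ d ∈ D, 2 ≤ d) (n m : ℕ) :
    m ∈ iMarkOptions (Finset.Icc 1 (t-1)) D n ↔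
    (∃ s, 1 ≤ s ∧ s ≤ t-1 ∧ s ≤ n ∧ m = n - s) ∨ (∃ d ∈ D, d ∣ n ∧ 1 ≤ n ∧ m = n / d) := by
  simp only [iMarkOptions, Finset.mem_union, Finset.mem_image, Finset.mem_filter, Finset.mem_Icc]
  constructor
  · rintro (⟨s, ⟨⟨h1, h2⟩, h3, h4⟩, rfl⟩ | ⟨d, ⟨hd, h2, h3, h4⟩, rfl⟩)
    · exact Or.inl ⟨s, h1, h2, h4, rfl⟩
    · exact Or.inr ⟨d, hd, h3, h4, rfl⟩
  · rintro (⟨s, h1, h2, h3, rfl⟩ | ⟨d, hd, h2, h3, rfl⟩)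
    · exact Or.inl ⟨s, ⟨⟨h1, h2⟩, h1, h3⟩, rfl⟩
    · exact Or.inr ⟨d, ⟨hd, hD d hd, h2, h3⟩, rfl⟩

/-- P-positions of the misère game i-MiMark([1,t-1],D) when d ≢ 1 (mod t) for all d ∈ D. -/
theorem iMiMark_t_D_Ppositions (t : ℕ) (ht : 2 ≤ t) (D : Finset ℕ)
    (hD : ∀ d ∈ D, 2 ≤ d) (hDt : ∀ d ∈ D, d % t ≠ 1) :
    ∀ n : ℕ, misereP (Finset.Icc 1 (t - 1)) D n ↔ ∃ q : ℕ, n = q * t + 1 := by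
  have hmod : ∀ n : ℕ, (∃ q : ℕ, n = q * t + 1) ↔ n % t = 1 := by
    intro n
    constructor
    · rintro ⟨q, rfl⟩
      simp [Nat.mul_add_mod', Nat.mod_eq_of_lt (by omega : 1 < t)]
    · intro h
      exact ⟨n / t, by have := Nat.mod_add_div' n t; omega⟩
  intro n
  induction n using Nat.strong_induction_on with
  | _ n ih =>
  rw [hmod, misereP_iff]
  constructor
  · -- misereP → n % t = 1
    rintro ⟨hne, hall⟩
    by_contra hr
    rcases Nat.eq_zero_or_pos n with rfl | hn
    · -- no options from 0
      obtain ⟨m, hm⟩ := hne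
      rcases (mem_iMarkOptions_iff D hD 0 m).1 hm with ⟨s, h1, h2, h3, _⟩ | ⟨d, hd, h2, h3, _⟩
      · omega
      · omega
    · -- find a P option
      have : ∃ m ∈ iMarkOptions (Finset.Icc 1 (t-1)) D n, m % t = 1 := by
        rcases Nat.eq_zero_or_pos (n % t) with h0 | h1
        · -- n ≡ 0 : take s = t - 1
          obtain ⟨k, hk⟩ := Nat.dvd_of_mod_eq_zero h0
          obtain ⟨k, rfl⟩ : ∃ k', k = k' + 1 := by
            rcases k with _ | k
            · omega
            · exact ⟨k, rfl⟩
          have hkn : n = k * t + t := by rw [hk]; ring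
          refine ⟨n - (t - 1), (mem_iMarkOptions_iff D hD n _).2
            (Or.inl ⟨t - 1, by omega, le_refl _, by omega, rfl⟩), ?_⟩
          have : n - (t - 1) = k * t + 1 := by omega
          rw [this]
          simp [Nat.mul_add_mod', Nat.mod_eq_of_lt (by omega : 1 < t)]
        · -- n % t ≥ 2 : take s = n % t - 1
          have h2 : 2 ≤ n % t := by omega
          have hle : n % t ≤ n := Nat.mod_le n t
          have hlt : n % t < t := Nat.mod_lt n (by omega)
          refine ⟨n - (n % t - 1), (mem_iMarkOptions_iff D hD n _).2
            (Or.inl ⟨n % t - 1, by omega, by omega, by omega, rfl⟩), ?_⟩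
          have hdm := Nat.mod_add_div' n t
          have : n - (n % t - 1) = (n / t) * t + 1 := by omega
          rw [this]
          simp [Nat.mul_add_mod', Nat.mod_eq_of_lt (by omega : 1 < t)]
      obtain ⟨m, hm, hm1⟩ := this
      exact hall m hm ((ih m (iMarkOptions_lt hm)).2 ((hmod m).2 hm1))
  · -- n % t = 1 → misereP
    intro h1
    have hn : 1 ≤ n := by
      rcases Nat.eq_zero_or_pos n with rfl | h
      · exact absurd h1 (by simp)
      · exact h
    constructor
    · exact ⟨n - 1, (mem_iMarkOptions_iff D hD n _).2 (Or.inl ⟨1, le_refl _, by omega, hn, rfl⟩)⟩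
    · intro m hm
      rw [ih m (iMarkOptions_lt hm), hmod]
      rcases (mem_iMarkOptions_iff D hD n m).1 hm with ⟨s, hs1, hs2, hs3, rfl⟩ | ⟨d, hd, hdvd, hn1, rfl⟩
      · -- subtraction option
        intro hm1
        have hmn : n - s ≤ n := Nat.sub_le n s
        have hmeq : (n - s) % t = n % t := by omega
        have : t ∣ n - (n - s) := (Nat.modEq_iff_dvd' hmn).1 hmeq
        have hsub : n - (n - s) = s := by omega
        rw [hsub] at this
        have := Nat.le_of_dvd (by omega) this
        omega
      · -- division option
        intro hm1
        have heq : n / d * d = n := Nat.div_mul_cancel hdvd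
        have h2d : 2 ≤ d := hD d hd
        have hmod1 : n / d % t = 1 := hm1
        have : n % t = d % t := by
          conv_lhs => rw [← heq]
          rw [Nat.mul_mod, hmod1, one_mul]
          exact Nat.mod_mod_of_dvd d (dvd_refl t)
        exact hDt d hd (by omega)
end

section
/- In the misère game i-MiMark({2,4},{2}), a position n is a P-position if and only if n ≡ 2 (mod 6) or n ≡ 3 (mod 6). -/
lemma mem_opts (n m : ℕ) : m ∈ iMarkOptions {2, 4} {2} n ↔
    (2 ≤ n ∧ m = n - 2) ∨ (4 ≤ n ∧ m = n - 4) ∨ (n % 2 = 0 ∧ 1 ≤ n ∧ m = n / 2) := by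
  simp only [iMarkOptions, Finset.mem_union, Finset.mem_image, Finset.mem_filter,
    Finset.mem_insert, Finset.mem_singleton, Nat.dvd_iff_mod_eq_zero]
  constructor
  · rintro (⟨s, ⟨hs, h1, h2⟩, rfl⟩ | ⟨d, ⟨hd, h2, hm, hn⟩, rfl⟩)
    · rcases hs with rfl | rfl
      · exact Or.inl ⟨h2, rfl⟩
      · exact Or.inr (Or.inl ⟨h2, rfl⟩)
    · subst hd; exact Or.inr (Or.inr ⟨hm, hn, rfl⟩)
  · rintro (⟨h, rfl⟩ | ⟨h, rfl⟩ | ⟨h, h1, rfl⟩)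
    · exact Or.inl ⟨2, ⟨Or.inl rfl, by omega, h⟩, rfl⟩
    · exact Or.inl ⟨4, ⟨Or.inr rfl, by omega, h⟩, rfl⟩
    · exact Or.inr ⟨2, ⟨rfl, by omega, h, h1⟩, rfl⟩

/-- P-positions of the misère game i-MiMark({2,4},{2}). -/
theorem iMiMark_24_2_Ppositions (n : ℕ) :
    misereP {2, 4} {2} n ↔ n % 6 = 2 ∨ n % 6 = 3 := by
  induction n using Nat.strong_induction_on with
  | _ n ih =>
  rw [misereP, Finset.Nonempty]
  simp only [Subtype.forall, mem_opts]
  constructor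
  · rintro ⟨⟨m, hm⟩, hall⟩
    have h2 : 2 ≤ n := by omega
    have hA : ¬((n-2) % 6 = 2 ∨ (n-2) % 6 = 3) := by
      rw [← ih (n-2) (by omega)]
      exact hall (n-2) (Or.inl ⟨h2, rfl⟩)
    have hB : 4 ≤ n → ¬((n-4) % 6 = 2 ∨ (n-4) % 6 = 3) := fun h4 => by
      rw [← ih (n-4) (by omega)]
      exact hall (n-4) (Or.inr (Or.inl ⟨h4, rfl⟩))
    have hC : n % 2 = 0 → ¬((n/2) % 6 = 2 ∨ (n/2) % 6 = 3) := fun he => by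
      rw [← ih (n/2) (by omega)]
      exact hall (n/2) (Or.inr (Or.inr ⟨he, by omega, rfl⟩))
    omega
  · intro hgood
    have h2 : 2 ≤ n := by omega
    refine ⟨⟨n - 2, Or.inl ⟨h2, rfl⟩⟩, ?_⟩
    intro m hm
    have hlt : m < n := by omega
    rw [ih m hlt]
    omega
end

section
/- Let a ≥ 1 be odd. In the misère game i-MiMark({a,2a},{2}), every position n with 0 < n < a is an N-position if and only if the 2-adic valuation of n is even; moreover 0 is an N-position. -/
lemma mem_options_small {a n m : ℕ} (ha : 1 ≤ a) (hn : n < a) :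
    m ∈ iMarkOptions {a, 2 * a} {2} n ↔ (2 ∣ n ∧ 1 ≤ n ∧ m = n / 2) := by
  simp only [iMarkOptions, Finset.mem_union, Finset.mem_image, Finset.mem_filter,
    Finset.mem_insert, Finset.mem_singleton]
  constructor
  · rintro (⟨s, ⟨hs, _, hsn⟩, rfl⟩ | ⟨d, ⟨hd, _, hdvd, hn1⟩, rfl⟩)
    · rcases hs with rfl | rfl <;> omega
    · subst hd; exact ⟨hdvd, hn1, rfl⟩
  · rintro ⟨h1, h2, rfl⟩
    right; exact ⟨2, ⟨rfl, le_refl 2, h1, h2⟩, rfl⟩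

lemma misereP_small {a n : ℕ} (ha : 1 ≤ a) (hn : n < a) :
    misereP {a, 2 * a} {2} n ↔ (2 ∣ n ∧ 1 ≤ n ∧ ¬ misereP {a, 2 * a} {2} (n / 2)) := by
  rw [misereP]
  constructor
  · rintro ⟨⟨m, hm⟩, hall⟩
    rw [mem_options_small ha hn] at hm
    obtain ⟨h1, h2, rfl⟩ := hm
    exact ⟨h1, h2, hall ⟨n / 2, (mem_options_small ha hn).2 ⟨h1, h2, rfl⟩⟩⟩
  · rintro ⟨h1, h2, h3⟩
    refine ⟨⟨n / 2, (mem_options_small ha hn).2 ⟨h1, h2, rfl⟩⟩, ?_⟩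
    rintro ⟨m, hm⟩
    rw [mem_options_small ha hn] at hm
    obtain ⟨_, _, rfl⟩ := hm
    exact h3

/-- Outcomes of positions below a in the misère game i-MiMark({a,2a},{2}), a odd. -/
theorem iMiMark_a_2a_small (a : ℕ) (ha : 1 ≤ a) (hao : Odd a) :
    (∀ n : ℕ, 0 < n → n < a →
      (¬ misereP {a, 2 * a} {2} n ↔ Even (padicValNat 2 n))) ∧
    ¬ misereP {a, 2 * a} {2} 0 := by
  constructor
  · intro n
    induction n using Nat.strong_induction_on with
    | _ n ih =>
      intro hpos hna
      by_cases hdvd : 2 ∣ n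
      · have hlt : n / 2 < n := Nat.div_lt_self hpos one_lt_two
        have hhalf : 0 < n / 2 := by omega
        have ihh := ih (n / 2) hlt hhalf (lt_trans hlt hna)
        have h2 : 1 ≤ padicValNat 2 n := one_le_padicValNat_of_dvd hpos.ne' hdvd
        have hv : padicValNat 2 n = padicValNat 2 (n / 2) + 1 := by
          have h1 := padicValNat.div (p := 2) hdvd
          omega
        rw [misereP_small ha hna, hv]
        simp only [hdvd, hpos, true_and, not_and, Nat.even_add_one, not_not]
        constructor
        · intro h
          intro he
          exact (ihh.2 he) (h (by omega))
        · intro h _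
          by_contra hP
          exact h (ihh.1 hP)
      · have hv : padicValNat 2 n = 0 := padicValNat.eq_zero_of_not_dvd hdvd
        rw [misereP_small ha hna, hv]
        simp [hdvd]
  · rw [misereP_small ha (by omega)]
    simp
end

section
/- In the game i-Mark({1},{2}), the Sprague-Grundy value of any position n satisfies g(n) ≤ 2; moreover g(n) = 0 for every odd n ≥ 5, and g(n) ∈ {1,2} for every even n ≥ 4. -/
lemma mex_le {s : Finset ℕ} {k : ℕ} (hk : k ∉ s) : mex s ≤ k :=
  Nat.sInf_le hk

lemma mex_eq_s19 {s : Finset ℕ} {k : ℕ} (hk : k ∉ s) (h : ∀ j < k, j ∈ s) : mex s = k := by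
  refine le_antisymm (mex_le hk) ?_
  by_contra hlt
  push_neg at hlt
  have hne : {j : ℕ | j ∉ s}.Nonempty := ⟨k, hk⟩
  have hmem : mex s ∈ {j : ℕ | j ∉ s} := Nat.sInf_mem hne
  exact hmem (h _ hlt)

lemma opts_odd {n : ℕ} (h1 : 1 ≤ n) (h2 : ¬ 2 ∣ n) :
    iMarkOptions {1} {2} n = {n - 1} := by
  ext m
  simp only [iMarkOptions, Finset.mem_union, Finset.mem_image, Finset.mem_filter,
    Finset.mem_singleton]
  constructor
  · rintro (⟨s, ⟨hs, _⟩, rfl⟩ | ⟨d, ⟨hd, _, hdvd, _⟩, rfl⟩)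
    · omega
    · subst hd; exact absurd hdvd h2
  · rintro rfl
    exact Or.inl ⟨1, by simp; omega, rfl⟩

lemma opts_even {n : ℕ} (h1 : 1 ≤ n) (h2 : 2 ∣ n) :
    iMarkOptions {1} {2} n = {n - 1, n / 2} := by
  ext m
  simp only [iMarkOptions, Finset.mem_union, Finset.mem_image, Finset.mem_filter,
    Finset.mem_singleton, Finset.mem_insert]
  constructor
  · rintro (⟨s, ⟨hs, _⟩, rfl⟩ | ⟨d, ⟨hd, _⟩, rfl⟩)
    · omega
    · subst hd; right; rfl
  · rintro (rfl | rfl)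
    · exact Or.inl ⟨1, by simp; omega, rfl⟩
    · exact Or.inr ⟨2, by simp; exact ⟨h2, h1⟩, rfl⟩

lemma grundy_odd {n : ℕ} (h1 : 1 ≤ n) (h2 : ¬ 2 ∣ n) :
    grundy {1} {2} n = mex {grundy {1} {2} (n - 1)} := by
  rw [grundy_eq, opts_odd h1 h2, Finset.image_singleton]

lemma grundy_even {n : ℕ} (h1 : 1 ≤ n) (h2 : 2 ∣ n) :
    grundy {1} {2} n = mex {grundy {1} {2} (n - 1), grundy {1} {2} (n / 2)} := by
  rw [grundy_eq, opts_even h1 h2, Finset.image_insert, Finset.image_singleton]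

lemma grundy_zero : grundy {1} {2} 0 = 0 := by
  rw [grundy_eq]
  have : iMarkOptions {1} {2} 0 = ∅ := by
    ext m; simp [iMarkOptions]
  rw [this]
  simp only [Finset.image_empty]
  exact mex_eq_s19 (by simp) (by omega)

lemma grundy_one : grundy {1} {2} 1 = 1 := by
  rw [grundy_odd (by norm_num) (by norm_num)]
  norm_num [grundy_zero]
  exact mex_eq_s19 (by simp) (by intro j hj; interval_cases j <;> simp)

lemma grundy_two : grundy {1} {2} 2 = 0 := by
  rw [grundy_even (by norm_num) (by norm_num)]
  norm_num [grundy_one]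
  exact mex_eq_s19 (by simp) (by omega)

lemma grundy_three : grundy {1} {2} 3 = 1 := by
  rw [grundy_odd (by norm_num) (by norm_num)]
  norm_num [grundy_two]
  exact mex_eq_s19 (by simp) (by intro j hj; interval_cases j <;> simp)

lemma grundy_four : grundy {1} {2} 4 = 2 := by
  rw [grundy_even (by norm_num) (by norm_num)]
  norm_num [grundy_three, grundy_two]
  exact mex_eq_s19 (by simp) (by intro j hj; interval_cases j <;> simp)

/-- Bounds and partial values of the Sprague-Grundy sequence of i-Mark({1},{2}). -/
theorem iMark_1_2_grundy_le_two (n : ℕ) :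
    grundy {1} {2} n ≤ 2 ∧
    (Odd n → 5 ≤ n → grundy {1} {2} n = 0) ∧
    (Even n → 4 ≤ n → grundy {1} {2} n = 1 ∨ grundy {1} {2} n = 2) := by
  induction n using Nat.strong_induction_on with
  | _ n ih =>
    match n, ih with
    | 0, _ => refine ⟨by simp [grundy_zero], by omega, by omega⟩
    | 1, _ => refine ⟨by simp [grundy_one], by omega, by omega⟩
    | 2, _ => refine ⟨by simp [grundy_two], by omega, by omega⟩
    | 3, _ => refine ⟨by simp [grundy_three], by omega, by omega⟩
    | 4, _ => refine ⟨by simp [grundy_four], by simp [Nat.odd_iff], fun _ _ => Or.inr grundy_four⟩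
    | (n+5), ih =>
      by_cases h2 : 2 ∣ (n + 5)
      · -- even, n+5 ≥ 6
        have h6 : 6 ≤ n + 5 := by omega
        have hodd : ¬ 2 ∣ (n + 5 - 1) := by omega
        have ihp : grundy {1} {2} (n + 5 - 1) = 0 :=
          (ih (n + 5 - 1) (by omega)).2.1 (Nat.odd_iff.mpr (by omega)) (by omega)
        have ihh : grundy {1} {2} ((n + 5) / 2) ≤ 2 :=
          (ih ((n + 5) / 2) (by omega)).1
        rw [grundy_even (by omega) h2, ihp]
        by_cases hx : grundy {1} {2} ((n + 5) / 2) = 1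
        · have : mex {0, grundy {1} {2} ((n + 5) / 2)} = 2 := by
            rw [hx]
            exact mex_eq_s19 (by simp) (by intro j hj; interval_cases j <;> simp)
          rw [this]
          exact ⟨by norm_num, by simp [Nat.odd_iff]; omega, fun _ _ => Or.inr rfl⟩
        · have : mex {0, grundy {1} {2} ((n + 5) / 2)} = 1 := by
            refine mex_eq_s19 (by simp; omega) ?_
            intro j hj; interval_cases j; simp
          rw [this]
          exact ⟨by norm_num, by simp [Nat.odd_iff]; omega, fun _ _ => Or.inl rfl⟩
      · -- odd, n+5 ≥ 5
        have hpe : 2 ∣ (n + 5 - 1) := by omega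
        have ihp : grundy {1} {2} (n + 5 - 1) = 1 ∨ grundy {1} {2} (n + 5 - 1) = 2 :=
          (ih (n + 5 - 1) (by omega)).2.2 (Nat.even_iff.mpr (by omega)) (by omega)
        rw [grundy_odd (by omega) h2]
        have : mex {grundy {1} {2} (n + 5 - 1)} = 0 :=
          mex_eq_s19 (by simp only [Finset.mem_singleton]; rcases ihp with h | h <;> omega) (by omega)
        rw [this]
        exact ⟨by norm_num, fun _ _ => rfl, by simp [Nat.even_iff]; omega⟩
end
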